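/- For every n ≥ 1, the set of extreme points (vertices) of the permutohedron Π_{n−1} is exactly the set {v_σ : σ a permutation of {1,…,n}}. -/

import Mathlib

/-- The vertex `v_σ` of the permutohedron: its `i`-th coordinate is `σ⁻¹(i)`
(with values in `{1, …, n}`). -/
noncomputable def permuVertex (n : ℕ) (σ : Equiv.Perm (Fin n)) : Fin n → ℝ :=
  fun i => ((σ⁻¹ i : ℕ) : ℝ) + 1

/-- The `(n-1)`-dimensional permutohedron `Π_{n-1} ⊆ ℝ^n`: the convex hull
of the `n!` points `v_σ`. -/
noncomputable def permutohedron (n : ℕ) : Set (Fin n → ℝ) :=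
  convexHull ℝ (Set.range (permuVertex n))

section Aux

open Finset

/-- If `f` is injective and monovaries with `f ∘ π`, then `f ∘ π = f`. -/
lemma monovary_comp_perm_eq {n : ℕ} (f : Fin n → ℝ) (hf : Function.Injective f)
    (π : Equiv.Perm (Fin n)) (h : Monovary f (f ∘ π)) : f ∘ π = f := by
  have key : ∀ i k : Fin n, f (π k) < f (π i) ↔ f k < f i := by
    intro i k
    constructor
    · intro hlt
      have hne : k ≠ i := by rintro rfl; exact lt_irrefl _ hlt
      have := h hlt
      exact lt_of_le_of_ne this (fun he => hne (hf he))
    · intro hlt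
      have hne : k ≠ i := fun he => by subst he; exact lt_irrefl _ hlt
      have hne' : f (π k) ≠ f (π i) := fun he => hne (π.injective (hf he))
      rcases lt_or_gt_of_ne hne' with h1 | h1
      · exact h1
      · exact absurd (h h1) (not_le.2 hlt)
  -- counting argument
  have card_lt : ∀ a b : Fin n, f a < f b →
      (univ.filter (fun k => f k < f a)).card < (univ.filter (fun k => f k < f b)).card := by
    intro a b hab
    apply Finset.card_lt_card
    constructor
    · intro k hk
      simp only [mem_filter, mem_univ, true_and] at hk ⊢
      exact hk.trans hab
    · intro hsub
      have : a ∈ univ.filter (fun k => f k < f b) := by simp [hab]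
      have := hsub this
      simp at this
  funext i
  show f (π i) = f i
  by_contra hne
  have e1 : (univ.filter (fun k => f k < f (π i))).card
      = (univ.filter (fun k => f k < f i)).card := by
    have e2 : (univ.filter (fun k => f (π k) < f (π i))).card
        = (univ.filter (fun k => f k < f (π i))).card := by
      apply Finset.card_bij (fun k _ => π k)
      · intro k hk; simp only [mem_filter, mem_univ, true_and] at hk ⊢; exact hk
      · intro a _ b _ hab; exact π.injective hab
      · intro b hb
        refine ⟨π⁻¹ b, ?_, by simp⟩
        simp only [mem_filter, mem_univ, true_and] at hb ⊢
        simpa using hb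
    rw [← e2]
    congr 1
    apply Finset.filter_congr
    intro k _
    simp [key i k]
  rcases lt_or_gt_of_ne hne with h1 | h1
  · exact absurd e1 (ne_of_lt (card_lt _ _ h1))
  · exact absurd e1.symm (ne_of_lt (card_lt _ _ h1))

lemma permuVertex_injective_fun (n : ℕ) (σ : Equiv.Perm (Fin n)) :
    Function.Injective (permuVertex n σ) := by
  intro i j hij
  have : ((σ⁻¹ i : ℕ) : ℝ) = ((σ⁻¹ j : ℕ) : ℝ) := by
    simpa [permuVertex] using hij
  have : (σ⁻¹ i : Fin n) = σ⁻¹ j := by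
    have := Nat.cast_injective (R := ℝ) this
    exact Fin.ext this
  simpa using (σ⁻¹).injective this

/-- The linear functional `x ↦ ∑ i, f i * x i` is linear. -/
lemma isLinearMap_dot {n : ℕ} (f : Fin n → ℝ) :
    IsLinearMap ℝ (fun x : Fin n → ℝ => ∑ i, f i * x i) := by
  constructor
  · intro x y; simp [mul_add, Finset.sum_add_distrib]
  · intro c x
    simp only [Pi.smul_apply, smul_eq_mul, Finset.mul_sum]
    exact Finset.sum_congr rfl fun i _ => by ring

lemma dot_vertex_le {n : ℕ} (σ τ : Equiv.Perm (Fin n)) :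
    ∑ i, permuVertex n σ i * permuVertex n τ i ≤ ∑ i, permuVertex n σ i * permuVertex n σ i := by
  set f := permuVertex n σ with hf
  have hπ : ∀ i, permuVertex n τ i = f ((σ * τ⁻¹) i) := by
    intro i; simp [hf, permuVertex, Equiv.Perm.mul_apply]
  calc ∑ i, f i * permuVertex n τ i = ∑ i, f i * f ((σ * τ⁻¹) i) := by
        simp_rw [hπ]
    _ ≤ ∑ i, f i * f i := (monovary_self f).sum_mul_comp_perm_le_sum_mul

lemma dot_vertex_lt {n : ℕ} (σ τ : Equiv.Perm (Fin n))
    (hne : permuVertex n τ ≠ permuVertex n σ) :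
    ∑ i, permuVertex n σ i * permuVertex n τ i < ∑ i, permuVertex n σ i * permuVertex n σ i := by
  set f := permuVertex n σ with hf
  have hπ : ∀ i, permuVertex n τ i = f ((σ * τ⁻¹) i) := by
    intro i; simp [hf, permuVertex, Equiv.Perm.mul_apply]
  have hcomp : permuVertex n τ = f ∘ (σ * τ⁻¹) := funext hπ
  have hπne : f ∘ (σ * τ⁻¹) ≠ f := by rw [← hcomp]; exact hne
  have : ∑ i, f i * f ((σ * τ⁻¹) i) < ∑ i, f i * f i := by
    rw [(monovary_self f).sum_mul_comp_perm_lt_sum_mul_iff]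
    intro hmono
    exact hπne (monovary_comp_perm_eq f (permuVertex_injective_fun n σ) _ hmono)
  calc ∑ i, f i * permuVertex n τ i = ∑ i, f i * f ((σ * τ⁻¹) i) := by
        simp_rw [hπ]
    _ < ∑ i, f i * f i := this

end Aux

/-- The extreme points of the permutohedron are exactly the points `v_σ`. -/
theorem statement2 (n : ℕ) (hn : 1 ≤ n) :
    Set.extremePoints ℝ (permutohedron n) = Set.range (permuVertex n) := by
  apply Set.Subset.antisymm
  · exact extremePoints_convexHull_subset
  rintro _ ⟨σ, rfl⟩
  set S := Set.range (permuVertex n) with hS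
  set v := permuVertex n σ with hv
  set f := permuVertex n σ with hfdef
  set ℓ : (Fin n → ℝ) → ℝ := fun x => ∑ i, f i * x i with hℓ
  have hlin : IsLinearMap ℝ ℓ := isLinearMap_dot f
  set c : ℝ := ℓ v with hc
  have hvS : v ∈ S := ⟨σ, rfl⟩
  -- every point of hull S has ℓ ≤ c
  have hle : ∀ x ∈ permutohedron n, ℓ x ≤ c := by
    intro x hx
    have : permutohedron n ⊆ {w | ℓ w ≤ c} := by
      apply convexHull_min _ (convex_halfSpace_le hlin c)
      rintro _ ⟨τ, rfl⟩
      exact dot_vertex_le σ τ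
    exact this hx
  -- every point of hull (S \ {v}) has ℓ < c
  have hlt : ∀ x ∈ convexHull ℝ (S \ {v}), ℓ x < c := by
    intro x hx
    have : convexHull ℝ (S \ {v}) ⊆ {w | ℓ w < c} := by
      apply convexHull_min _ (convex_halfSpace_lt hlin c)
      rintro _ ⟨⟨τ, rfl⟩, hne⟩
      exact dot_vertex_lt σ τ (by simpa using hne)
    exact this hx
  -- key: points of hull S with ℓ x = c equal v
  have hface : ∀ x ∈ permutohedron n, ℓ x = c → x = v := by
    intro x hx hxc
    rcases Set.eq_empty_or_nonempty (S \ {v}) with hemp | hne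
    · -- S = {v}
      have hSv : S = {v} := by
        apply Set.Subset.antisymm
        · intro y hy
          by_contra hyv
          exact Set.eq_empty_iff_forall_notMem.1 hemp y ⟨hy, hyv⟩
        · simpa using hvS
      have : permutohedron n = {v} := by
        rw [permutohedron, ← hS, hSv, convexHull_singleton]
      rw [this] at hx
      exact hx
    · have hins : S = insert v (S \ {v}) := by
        rw [Set.insert_diff_singleton, Set.insert_eq_self.2 hvS]
      have hx' : x ∈ convexHull ℝ (insert v (S \ {v})) := by
        rw [← hins]; exact hx
      rw [convexHull_insert hne, mem_convexJoin] at hx'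
      obtain ⟨v', hv', y, hy, hxy⟩ := hx'
      rw [Set.mem_singleton_iff] at hv'
      subst hv'
      obtain ⟨a, b, ha, hb, hab, rfl⟩ := hxy
      have hly : ℓ y < c := hlt y hy
      have : ℓ (a • v + b • y) = a * c + b * ℓ y := by
        rw [hlin.map_add, hlin.map_smul, hlin.map_smul]; simp [smul_eq_mul, hc]
      rw [this] at hxc
      have hb0 : b = 0 := by
        by_contra hb0
        have hbpos : 0 < b := lt_of_le_of_ne hb (Ne.symm hb0)
        have : a * c + b * ℓ y < a * c + b * c := by
          exact add_lt_add_of_le_of_lt (le_refl _) (by exact mul_lt_mul_of_pos_left hly hbpos)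
        rw [hxc] at this
        have : c < c := by
          calc c < a * c + b * c := this
            _ = (a + b) * c := by ring
            _ = c := by rw [hab, one_mul]
        exact lt_irrefl _ this
      have ha1 : a = 1 := by rw [hb0, add_zero] at hab; exact hab
      rw [hb0, ha1]; simp
  -- now prove extremeness
  rw [mem_extremePoints]
  refine ⟨subset_convexHull ℝ S hvS, ?_⟩
  intro x₁ hx₁ x₂ hx₂ hseg
  obtain ⟨a, b, ha, hb, hab, hsum⟩ := hseg
  have h1 : ℓ x₁ ≤ c := hle x₁ hx₁
  have h2 : ℓ x₂ ≤ c := hle x₂ hx₂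
  have hlv : ℓ (a • x₁ + b • x₂) = a * ℓ x₁ + b * ℓ x₂ := by
    rw [hlin.map_add, hlin.map_smul, hlin.map_smul]; simp [smul_eq_mul]
  have hceq : a * ℓ x₁ + b * ℓ x₂ = c := by rw [← hlv, hsum]
  have h1c : ℓ x₁ = c := by
    by_contra hne
    have h1' : ℓ x₁ < c := lt_of_le_of_ne h1 hne
    have : a * ℓ x₁ + b * ℓ x₂ < a * c + b * c :=
      add_lt_add_of_lt_of_le (mul_lt_mul_of_pos_left h1' ha)
        (mul_le_mul_of_nonneg_left h2 hb.le)
    rw [hceq] at this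
    have : c < c := by
      calc c < a * c + b * c := this
        _ = (a + b) * c := by ring
        _ = c := by rw [hab, one_mul]
    exact lt_irrefl _ this
  have h2c : ℓ x₂ = c := by
    rw [h1c] at hceq
    have hac : a * c + b * c = c := by rw [← add_mul, hab, one_mul]
    have hb' : b * ℓ x₂ = b * c := by linarith
    exact mul_left_cancel₀ (ne_of_gt hb) hb'
  exact ⟨hface x₁ hx₁ h1c, hface x₂ hx₂ h2c⟩
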